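/- In the setting of the MultiVAW analysis, suppose additionally Λ_{t-1} ⪯ Λ_t (i.e. Λ_t − Λ_{t-1} is positive semidefinite). Then for every t ∈ [T]: ‖X_tθ_t − y_t‖₂² + L̃_{t-1}(θ̃_t) − L̃_t(θ̃_{t+1}) ≤ y_tᵀ X_t A_t^{-1} X_tᵀ y_t. -/

import Mathlib

open Matrix Finset

noncomputable section


private lemma mv_sum_Icc_split {M : Type*} [AddCommMonoid M] (f : ℕ → M) (t : ℕ) (ht : 1 ≤ t) :
    ∑ s ∈ Icc 1 t, f s = (∑ s ∈ Icc 1 (t-1), f s) + f t := by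
  have h : t - 1 + 1 = t := by omega
  rw [← h, ← Finset.insert_Icc_right_eq_Icc_add_one (by omega), Finset.sum_insert (by simp), h]
  exact add_comm _ _

private lemma mv_dot_symm {d : ℕ} {S : Matrix (Fin d) (Fin d) ℝ} (hS : Sᵀ = S)
    (u z : Fin d → ℝ) : u ⬝ᵥ S *ᵥ z = (S *ᵥ u) ⬝ᵥ z := by
  rw [dotProduct_mulVec]
  congr 1
  rw [← vecMul_transpose, hS]

private lemma mv_sum_sq {n : ℕ} (w : Fin n → ℝ) : ∑ i, w i ^ 2 = w ⬝ᵥ w := by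
  simp [dotProduct, sq]

private lemma mv_expand_sq {n d : ℕ} (X : Matrix (Fin n) (Fin d) ℝ) (yv : Fin n → ℝ)
    (v : Fin d → ℝ) :
    ∑ i, ((X *ᵥ v - yv) i) ^ 2
      = v ⬝ᵥ (Xᵀ * X) *ᵥ v - 2 * ((Xᵀ *ᵥ yv) ⬝ᵥ v) + yv ⬝ᵥ yv := by
  rw [mv_sum_sq, sub_dotProduct, dotProduct_sub, dotProduct_sub, ← mulVec_mulVec]
  have h1 : v ⬝ᵥ Xᵀ *ᵥ (X *ᵥ v) = (X *ᵥ v) ⬝ᵥ (X *ᵥ v) := by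
    rw [dotProduct_mulVec, vecMul_transpose]
  have h2 : (Xᵀ *ᵥ yv) ⬝ᵥ v = yv ⬝ᵥ X *ᵥ v := by
    rw [mulVec_transpose, ← dotProduct_mulVec]
  rw [h1, h2, dotProduct_comm (X *ᵥ v) yv]
  ring

private lemma mv_posSemidef_sum {d : ℕ} (f : ℕ → Matrix (Fin d) (Fin d) ℝ) (s : Finset ℕ)
    (h : ∀ i ∈ s, (f i).PosSemidef) : (∑ i ∈ s, f i).PosSemidef :=
  Finset.sum_induction f _ (fun _ _ ha hb => ha.add hb) Matrix.PosSemidef.zero h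

private lemma mv_XtX_psd {n d : ℕ} (X : Matrix (Fin n) (Fin d) ℝ) : (Xᵀ * X).PosSemidef := by
  have := Matrix.posSemidef_conjTranspose_mul_self X
  rwa [conjTranspose_eq_transpose_of_trivial] at this

private lemma mv_sum_matrix_mulVec {d : ℕ} (s : Finset ℕ)
    (f : ℕ → Matrix (Fin d) (Fin d) ℝ) (v : Fin d → ℝ) :
    (∑ i ∈ s, f i) *ᵥ v = ∑ i ∈ s, (f i *ᵥ v) := by
  ext j
  simp [Matrix.mulVec, dotProduct, Matrix.sum_apply, Finset.sum_mul]
  exact Finset.sum_comm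

private lemma mv_dot_sum {d : ℕ} (s : Finset ℕ) (g : ℕ → Fin d → ℝ) (v : Fin d → ℝ) :
    v ⬝ᵥ (∑ i ∈ s, g i) = ∑ i ∈ s, v ⬝ᵥ g i := by
  simp [dotProduct, Finset.sum_apply, Finset.mul_sum]
  exact Finset.sum_comm

private lemma mv_sum_dot {d : ℕ} (s : Finset ℕ) (g : ℕ → Fin d → ℝ) (v : Fin d → ℝ) :
    (∑ i ∈ s, g i) ⬝ᵥ v = ∑ i ∈ s, g i ⬝ᵥ v := by
  simp [dotProduct, Finset.sum_apply, Finset.sum_mul]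
  exact Finset.sum_comm

/-- **Per-step upper bound in the MultiVAW analysis.**  In the setting of the
MultiVAW analysis (`A_t = Λ_t + ∑_{s=1}^t XₛᵀXₛ`, `A_0 = Λ_0`,
`b_t = ∑_{s=1}^t Xₛᵀyₛ`, `θ_t = A_t⁻¹ b_{t-1}`, `θ̃_t = A_{t-1}⁻¹ b_{t-1}`,
`L̃_t(θ) = θᵀΛ_tθ + ∑_{s=1}^t ‖Xₛθ − yₛ‖₂²`), if moreover `Λ_{t-1} ⪯ Λ_t`,
then for every `t ∈ [T]`:
`‖X_tθ_t − y_t‖₂² + L̃_{t-1}(θ̃_t) − L̃_t(θ̃_{t+1}) ≤ y_tᵀ X_t A_t⁻¹ X_tᵀ y_t`. -/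
theorem multivaw_per_step_bound
    (T d : ℕ) (n : ℕ → ℕ)
    (X : (s : ℕ) → Matrix (Fin (n s)) (Fin d) ℝ)
    (y : (s : ℕ) → Fin (n s) → ℝ)
    (Λ : ℕ → Matrix (Fin d) (Fin d) ℝ)
    (hΛ : ∀ t ≤ T, (Λ t).PosDef)
    (hΛmono : ∀ t, 1 ≤ t → t ≤ T → (Λ t - Λ (t - 1)).PosSemidef)
    (A : ℕ → Matrix (Fin d) (Fin d) ℝ)
    (hA : ∀ t ≤ T, A t = Λ t + ∑ s ∈ Icc 1 t, (X s)ᵀ * X s)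
    (b : ℕ → (Fin d → ℝ))
    (hb : ∀ t ≤ T, b t = ∑ s ∈ Icc 1 t, (X s)ᵀ.mulVec (y s))
    (θ θt : ℕ → (Fin d → ℝ))
    (hθ : ∀ t, 1 ≤ t → t ≤ T → θ t = (A t)⁻¹.mulVec (b (t - 1)))
    (hθt : ∀ t, 1 ≤ t → t ≤ T + 1 → θt t = (A (t - 1))⁻¹.mulVec (b (t - 1)))
    (L : ℕ → (Fin d → ℝ) → ℝ)
    (hL : ∀ t ≤ T, ∀ v : Fin d → ℝ,
      L t v = v ⬝ᵥ (Λ t).mulVec v + ∑ s ∈ Icc 1 t, ∑ i, ((X s).mulVec v - y s) i ^ 2)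
    (t : ℕ) (ht : t ∈ Icc 1 T) :
    (∑ i, ((X t).mulVec (θ t) - y t) i ^ 2) + L (t - 1) (θt t) - L t (θt (t + 1))
      ≤ y t ⬝ᵥ ((X t) * (A t)⁻¹ * (X t)ᵀ).mulVec (y t) := by
  obtain ⟨ht1, htT⟩ := Finset.mem_Icc.mp ht
  have htT' : t - 1 ≤ T := by omega
  -- abbreviations
  set u : Fin d → ℝ := b (t - 1) with hu
  set Q : Matrix (Fin d) (Fin d) ℝ := (X t)ᵀ * X t with hQ
  set P : Matrix (Fin d) (Fin d) ℝ := Λ t - Λ (t - 1) with hP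
  set R : Matrix (Fin d) (Fin d) ℝ := P + Q with hR
  set A0 : Matrix (Fin d) (Fin d) ℝ := A (t - 1) with hA0def
  set A1 : Matrix (Fin d) (Fin d) ℝ := A t with hA1def
  -- positive definiteness
  have hQpsd : Q.PosSemidef := mv_XtX_psd (X t)
  have hPpsd : P.PosSemidef := hΛmono t ht1 htT
  have hA0pd : A0.PosDef := by
    rw [hA0def, hA (t - 1) htT']
    exact (hΛ (t - 1) htT').add_posSemidef (mv_posSemidef_sum _ _ (fun i _ => mv_XtX_psd (X i)))
  have hA1pd : A1.PosDef := by
    rw [hA1def, hA t htT]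
    exact (hΛ t htT).add_posSemidef (mv_posSemidef_sum _ _ (fun i _ => mv_XtX_psd (X i)))
  have hd0 : IsUnit A0.det := hA0pd.det_pos.ne'.isUnit
  have hd1 : IsUnit A1.det := hA1pd.det_pos.ne'.isUnit
  have h0inv : A0 * A0⁻¹ = 1 := Matrix.mul_nonsing_inv _ hd0
  have h0inv' : A0⁻¹ * A0 = 1 := Matrix.nonsing_inv_mul _ hd0
  have h1inv : A1 * A1⁻¹ = 1 := Matrix.mul_nonsing_inv _ hd1
  have h1inv' : A1⁻¹ * A1 = 1 := Matrix.nonsing_inv_mul _ hd1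
  -- symmetry facts
  have hsymm : ∀ (M : Matrix (Fin d) (Fin d) ℝ), M.IsHermitian → Mᵀ = M := by
    intro M hM
    rw [← conjTranspose_eq_transpose_of_trivial]
    exact hM
  have hA0s : A0⁻¹ᵀ = A0⁻¹ := hsymm _ hA0pd.inv.isHermitian
  have hA1s : A1⁻¹ᵀ = A1⁻¹ := hsymm _ hA1pd.inv.isHermitian
  have hPs : Pᵀ = P := hsymm _ hPpsd.isHermitian
  have hQs : Qᵀ = Q := hsymm _ hQpsd.isHermitian
  have hRs : Rᵀ = R := by rw [hR, transpose_add, hPs, hQs]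
  -- structural relations
  have hA1eq : A1 = A0 + R := by
    rw [hA1def, hA0def, hA t htT, hA (t - 1) htT',
      mv_sum_Icc_split (fun s => (X s)ᵀ * X s) t ht1, hR, hP, hQ]
    abel
  have hbt : b t = u + (X t)ᵀ *ᵥ y t := by
    rw [hb t htT, hu, hb (t - 1) htT', mv_sum_Icc_split (fun s => (X s)ᵀ *ᵥ y s) t ht1]
  -- key matrix identity
  have e1 : A1 * A0⁻¹ * A1 = A1 + Q + (P + R * A0⁻¹ * R) := by
    rw [hA1eq]
    calc (A0 + R) * A0⁻¹ * (A0 + R)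
        = (A0 * A0⁻¹ + R * A0⁻¹) * (A0 + R) := by rw [add_mul]
      _ = (1 + R * A0⁻¹) * (A0 + R) := by rw [h0inv]
      _ = A0 + R + (R * A0⁻¹ * A0 + R * A0⁻¹ * R) := by
            rw [add_mul, one_mul, mul_add]
      _ = A0 + R + (R + R * A0⁻¹ * R) := by
            rw [Matrix.mul_assoc R A0⁻¹ A0, h0inv', mul_one]
      _ = A0 + R + Q + (P + R * A0⁻¹ * R) := by
            conv_lhs => rw [hR]
            conv_rhs => rw [hR]
            abel
  have hkey : A0⁻¹ = A1⁻¹ + A1⁻¹ * Q * A1⁻¹ + A1⁻¹ * (P + R * A0⁻¹ * R) * A1⁻¹ := by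
    have h2 : A1⁻¹ * (A1 * A0⁻¹ * A1) * A1⁻¹ = A0⁻¹ := by
      rw [← Matrix.mul_assoc, ← Matrix.mul_assoc, h1inv', Matrix.one_mul,
        Matrix.mul_assoc, h1inv, Matrix.mul_one]
    calc A0⁻¹ = A1⁻¹ * (A1 * A0⁻¹ * A1) * A1⁻¹ := h2.symm
      _ = A1⁻¹ * (A1 + Q + (P + R * A0⁻¹ * R)) * A1⁻¹ := by rw [e1]
      _ = A1⁻¹ + A1⁻¹ * Q * A1⁻¹ + A1⁻¹ * (P + R * A0⁻¹ * R) * A1⁻¹ := by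
            rw [mul_add, mul_add, h1inv', add_mul, add_mul, one_mul]
  -- vectors
  set w : Fin d → ℝ := A1⁻¹ *ᵥ u with hw
  -- quadratic form conversion for sandwiched matrices
  have hsand : ∀ (M : Matrix (Fin d) (Fin d) ℝ),
      u ⬝ᵥ (A1⁻¹ * M * A1⁻¹) *ᵥ u = w ⬝ᵥ M *ᵥ w := by
    intro M
    rw [← mulVec_mulVec, ← mulVec_mulVec, mv_dot_symm hA1s, ← hw]
  -- nonnegativity of the remainder
  have hrem : 0 ≤ w ⬝ᵥ (P + R * A0⁻¹ * R) *ᵥ w := by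
    have hPw : 0 ≤ w ⬝ᵥ P *ᵥ w := by
      have := hPpsd.dotProduct_mulVec_nonneg w
      simpa using this
    have hRw : 0 ≤ w ⬝ᵥ (R * A0⁻¹ * R) *ᵥ w := by
      have h1 : w ⬝ᵥ (R * A0⁻¹ * R) *ᵥ w = (R *ᵥ w) ⬝ᵥ A0⁻¹ *ᵥ (R *ᵥ w) := by
        rw [← mulVec_mulVec, ← mulVec_mulVec, mv_dot_symm hRs]
      rw [h1]
      have := hA0pd.inv.posSemidef.dotProduct_mulVec_nonneg (R *ᵥ w)
      simpa using this
    rw [add_mulVec, dotProduct_add]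
    exact add_nonneg hPw hRw
  -- the scalar inequality from the key matrix identity
  have hscalar : u ⬝ᵥ A1⁻¹ *ᵥ u + w ⬝ᵥ Q *ᵥ w ≤ u ⬝ᵥ A0⁻¹ *ᵥ u := by
    have := congrArg (fun M => u ⬝ᵥ M *ᵥ u) hkey
    simp only [add_mulVec, dotProduct_add] at this
    rw [hsand Q, hsand (P + R * A0⁻¹ * R)] at this
    linarith
  -- value of L
  have hLval : ∀ τ, τ ≤ T → ∀ v : Fin d → ℝ,
      L τ v = v ⬝ᵥ (A τ) *ᵥ v - 2 * ((b τ) ⬝ᵥ v) + ∑ s ∈ Icc 1 τ, y s ⬝ᵥ y s := by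
    intro τ hτ v
    rw [hL τ hτ v, hA τ hτ, hb τ hτ]
    rw [add_mulVec, dotProduct_add, mv_sum_matrix_mulVec, mv_dot_sum, mv_sum_dot]
    simp only [mv_expand_sq, Finset.sum_add_distrib, Finset.sum_sub_distrib,
      Finset.mul_sum, mulVec_mulVec]
    ring
  -- value of L (t-1) (θt t)
  have hθt_t : θt t = A0⁻¹ *ᵥ u := by
    rw [hθt t ht1 (by omega), hA0def, hu]
  have hθt_t1 : θt (t + 1) = A1⁻¹ *ᵥ (b t) := by
    have := hθt (t + 1) (by omega) (by omega)
    simpa [hA1def] using this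
  have hquad : ∀ (B : Matrix (Fin d) (Fin d) ℝ) (g : Fin d → ℝ), B * B⁻¹ = 1 → B⁻¹ᵀ = B⁻¹ →
      (B⁻¹ *ᵥ g) ⬝ᵥ B *ᵥ (B⁻¹ *ᵥ g) - 2 * (g ⬝ᵥ (B⁻¹ *ᵥ g)) = - (g ⬝ᵥ B⁻¹ *ᵥ g) := by
    intro B g hB hBs
    rw [mulVec_mulVec, hB, one_mulVec, dotProduct_comm (B⁻¹ *ᵥ g) g]
    ring
  have hL0 : L (t - 1) (θt t) = (∑ s ∈ Icc 1 (t - 1), y s ⬝ᵥ y s) - u ⬝ᵥ A0⁻¹ *ᵥ u := by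
    rw [hLval (t - 1) htT' _, hθt_t, ← hA0def, ← hu]
    have := hquad A0 u h0inv hA0s
    linarith [this]
  have hL1 : L t (θt (t + 1)) = (∑ s ∈ Icc 1 t, y s ⬝ᵥ y s) - (b t) ⬝ᵥ A1⁻¹ *ᵥ (b t) := by
    rw [hLval t htT _, hθt_t1, ← hA1def]
    have := hquad A1 (b t) h1inv hA1s
    linarith [this]
  -- expand b t quadratic form
  have hcross : ((X t)ᵀ *ᵥ y t) ⬝ᵥ A1⁻¹ *ᵥ u = y t ⬝ᵥ (X t) *ᵥ w := by
    rw [mulVec_transpose, ← dotProduct_mulVec, hw]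
  have hcross2 : u ⬝ᵥ A1⁻¹ *ᵥ ((X t)ᵀ *ᵥ y t) = y t ⬝ᵥ (X t) *ᵥ w := by
    rw [mv_dot_symm hA1s, dotProduct_comm]
    exact hcross
  have hyy : ((X t)ᵀ *ᵥ y t) ⬝ᵥ A1⁻¹ *ᵥ ((X t)ᵀ *ᵥ y t)
      = y t ⬝ᵥ ((X t) * A1⁻¹ * (X t)ᵀ) *ᵥ y t := by
    rw [← mulVec_mulVec, ← mulVec_mulVec, mulVec_transpose, ← dotProduct_mulVec]
  have hbt_quad : (b t) ⬝ᵥ A1⁻¹ *ᵥ (b t)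
      = u ⬝ᵥ A1⁻¹ *ᵥ u + 2 * (y t ⬝ᵥ (X t) *ᵥ w)
        + y t ⬝ᵥ ((X t) * A1⁻¹ * (X t)ᵀ) *ᵥ y t := by
    rw [hbt, mulVec_add, dotProduct_add, add_dotProduct, add_dotProduct,
      hcross, hcross2, hyy]
    ring
  -- first term
  have hθ_t : θ t = w := by
    rw [hθ t ht1 htT, ← hA1def, ← hu]
  have hfirst : (∑ i, ((X t).mulVec (θ t) - y t) i ^ 2)
      = w ⬝ᵥ Q *ᵥ w - 2 * (y t ⬝ᵥ (X t) *ᵥ w) + y t ⬝ᵥ y t := by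
    rw [hθ_t, mv_expand_sq, hQ]
    have : ((X t)ᵀ *ᵥ y t) ⬝ᵥ w = y t ⬝ᵥ (X t) *ᵥ w := by
      rw [mulVec_transpose, ← dotProduct_mulVec]
    rw [this]
  -- combine
  have hsumsplit : (∑ s ∈ Icc 1 t, y s ⬝ᵥ y s)
      = (∑ s ∈ Icc 1 (t - 1), y s ⬝ᵥ y s) + y t ⬝ᵥ y t :=
    mv_sum_Icc_split (fun s => y s ⬝ᵥ y s) t ht1
  rw [hfirst, hL0, hL1, hbt_quad, hsumsplit]
  linarith
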